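/- arXiv:2104.05593 — 2 statements merged into one kernel-verified Lean document; each statement's English description precedes it below -/
import Mathlib

section
/- For the gap-sum S(n) of the sequence a(n) = C(n+2,3), we have S(n) = 5*C(n+3,4) + 10*C(n+3,5). -/
lemma c2' (n : ℕ) : 2 * Nat.choose (n + 2) 2 = (n + 1) * (n + 2) := by
  induction n with
  | zero => decide
  | succ k ih =>
    rw [show k + 1 + 2 = (k + 2) + 1 from rfl, Nat.choose_succ_succ]
    simp [Nat.choose_one_right] at *
    nlinarith [ih]

lemma c3' (n : ℕ) : 6 * Nat.choose (n + 2) 3 = n * (n + 1) * (n + 2) := by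
  induction n with
  | zero => decide
  | succ k ih =>
    rw [show k + 1 + 2 = (k + 2) + 1 from rfl, Nat.choose_succ_succ]
    have := c2' k
    nlinarith [ih, this]

lemma c4' (n : ℕ) : 24 * Nat.choose (n + 3) 4 = n * (n + 1) * (n + 2) * (n + 3) := by
  induction n with
  | zero => decide
  | succ k ih =>
    rw [show k + 1 + 3 = (k + 3) + 1 from rfl, Nat.choose_succ_succ]
    have := c3' (k + 1)
    nlinarith [ih, this]

lemma c5' (n : ℕ) : 120 * Nat.choose (n + 4) 5 = n * (n + 1) * (n + 2) * (n + 3) * (n + 4) := by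
  induction n with
  | zero => decide
  | succ k ih =>
    rw [show k + 1 + 4 = (k + 4) + 1 from rfl, Nat.choose_succ_succ]
    have := c4' (k + 1)
    nlinarith [ih, this]

lemma gauss' (m : ℕ) : 2 * ∑ j ∈ Finset.Icc 1 m, j = m * (m + 1) := by
  induction m with
  | zero => decide
  | succ k ih =>
    rw [Finset.sum_Icc_succ_top (by omega)]
    nlinarith [ih]

theorem gap_sum_tetrahedral_binomial (a : ℕ → ℕ) (ha : ∀ n, a n = Nat.choose (n + 2) 3)
    (S : ℕ → ℕ)
    (hS : ∀ n, S n = ∑ j ∈ Finset.Icc 1 (a (n + 1) - a n - 1), (a n + j)) :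
    ∀ n, S n = 5 * Nat.choose (n + 3) 4 + 10 * Nat.choose (n + 3) 5 := by
  intro n
  set c := Nat.choose (n + 2) 3 with hc
  set d := Nat.choose (n + 2) 2 with hd
  -- gap
  have hgap : a (n + 1) - a n - 1 = d - 1 := by
    rw [ha, ha]
    have h1 : Nat.choose (n + 1 + 2) 3 = Nat.choose (n + 2) 2 + Nat.choose (n + 2) 3 := by
      rw [show n + 1 + 2 = (n + 2) + 1 from rfl, Nat.choose_succ_succ]
    omega
  set m := d - 1 with hm
  have hd2 : 2 * d = (n + 1) * (n + 2) := c2' n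
  have hd1 : 1 ≤ d := by nlinarith
  have h2m : 2 * m = n * (n + 3) := by
    have : 2 * m + 2 = 2 * d := by omega
    nlinarith [hd2]
  have h6c : 6 * c = n * (n + 1) * (n + 2) := c3' n
  -- sum decomposition
  have hsum : S n = m * c + ∑ j ∈ Finset.Icc 1 m, j := by
    rw [hS, hgap, ha, Finset.sum_add_distrib, Finset.sum_const, Nat.card_Icc]
    simp [mul_comm, hc]
  set T := ∑ j ∈ Finset.Icc 1 m, j with hT
  have h2T : 2 * T = m * (m + 1) := gauss' m
  have h4 : 24 * Nat.choose (n + 3) 4 = n * (n + 1) * (n + 2) * (n + 3) := c4' n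
  have h5 : (120 : ℤ) * Nat.choose (n + 3) 5
      = ((n : ℤ) - 1) * n * (n + 1) * (n + 2) * (n + 3) := by
    cases n with
    | zero => decide
    | succ k =>
      have hk : (120 : ℤ) * Nat.choose (k + 4) 5
          = (k : ℤ) * (k + 1) * (k + 2) * (k + 3) * (k + 4) := by exact_mod_cast c5' k
      have he : k + 1 + 3 = k + 4 := by omega
      rw [he]
      push_cast
      linear_combination hk
  have key : (24 : ℤ) * S n = 24 * (5 * Nat.choose (n + 3) 4 + 10 * Nat.choose (n + 3) 5) := by
    have hsum' : (S n : ℤ) = m * c + T := by exact_mod_cast hsum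
    have h2m' : (2 : ℤ) * m = n * (n + 3) := by exact_mod_cast h2m
    have h6c' : (6 : ℤ) * c = n * (n + 1) * (n + 2) := by exact_mod_cast h6c
    have h2T' : (2 : ℤ) * T = m * (m + 1) := by exact_mod_cast h2T
    have h4' : (24 : ℤ) * Nat.choose (n + 3) 4 = n * (n + 1) * (n + 2) * (n + 3) := by
      exact_mod_cast h4
    have e1 : (24 : ℤ) * (m * c) = 2 * ((n : ℤ) * (n + 3)) * ((n : ℤ) * ((n : ℤ) + 1) * ((n : ℤ) + 2)) := by
      rw [← h2m', ← h6c']; ring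
    have e2 : (24 : ℤ) * T = 3 * ((n : ℤ) * (n + 3)) * ((n : ℤ) * (n + 3) + 2) := by
      linear_combination 12 * h2T' + 3 * ((n : ℤ) * (n + 3) + 2 * (m : ℤ) + 2) * h2m'
    rw [hsum']
    linear_combination e1 + e2 - 5 * h4' - 2 * h5
  have : (24 : ℤ) * S n = 24 * (5 * Nat.choose (n + 3) 4 + 10 * Nat.choose (n + 3) 5) := key
  have h24 : 24 * S n = 24 * (5 * Nat.choose (n + 3) 4 + 10 * Nat.choose (n + 3) 5) := by
    exact_mod_cast this
  omega
end

section
/- For the gap-sum S(n) of the sequence a(n) = C(n+3,4), we have S(n) = 9*C(n+4,5) + 36*C(n+4,6) + 34*C(n+4,7) + C(n+3,7). -/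
private lemma gauss_icc (t : ℕ) : 2 * ∑ j ∈ Finset.Icc 1 t, j = t * (t + 1) := by
  induction t with
  | zero => simp
  | succ k ih =>
    rw [Finset.sum_Icc_succ_top (by omega : 1 ≤ k + 1)]
    nlinarith [ih]

theorem gap_sum_choose_four_binomial (a : ℕ → ℕ) (ha : ∀ n, a n = Nat.choose (n + 3) 4)
    (S : ℕ → ℕ)
    (hS : ∀ n, S n = ∑ j ∈ Finset.Icc 1 (a (n + 1) - a n - 1), (a n + j)) :
    ∀ n, S n = 9 * Nat.choose (n + 4) 5 + 36 * Nat.choose (n + 4) 6 +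
      34 * Nat.choose (n + 4) 7 + Nat.choose (n + 3) 7 := by
  intro n
  rcases Nat.lt_or_ge n 4 with h | h
  · interval_cases n <;> (rw [hS]; simp only [ha]; decide)
  · obtain ⟨m, rfl⟩ : ∃ m, n = m + 4 := ⟨n - 4, by omega⟩
    rw [hS]; simp only [ha]
    simp only [show m + 4 + 1 + 3 = m + 8 from by omega, show m + 4 + 3 = m + 7 from by omega,
      show m + 4 + 4 = m + 8 from by omega]
    -- product formulas for the binomial coefficients
    have h3 : 6 * (m+7).choose 3 = (m+5)*(m+6)*(m+7) := by
      have h := Nat.descFactorial_eq_factorial_mul_choose (m+7) 3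
      simp [Nat.descFactorial, Nat.factorial] at h
      rw [← h]; ring
    have h4 : 24 * (m+7).choose 4 = (m+4)*(m+5)*(m+6)*(m+7) := by
      have h := Nat.descFactorial_eq_factorial_mul_choose (m+7) 4
      simp [Nat.descFactorial, Nat.factorial] at h
      rw [← h]; ring
    have h5 : 120 * (m+8).choose 5 = (m+4)*(m+5)*(m+6)*(m+7)*(m+8) := by
      have h := Nat.descFactorial_eq_factorial_mul_choose (m+8) 5
      simp [Nat.descFactorial, Nat.factorial] at h
      rw [← h]; ring
    have h6 : 720 * (m+8).choose 6 = (m+3)*(m+4)*(m+5)*(m+6)*(m+7)*(m+8) := by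
      have h := Nat.descFactorial_eq_factorial_mul_choose (m+8) 6
      simp [Nat.descFactorial, Nat.factorial] at h
      rw [← h]; ring
    have h7 : 5040 * (m+8).choose 7 = (m+2)*(m+3)*(m+4)*(m+5)*(m+6)*(m+7)*(m+8) := by
      have h := Nat.descFactorial_eq_factorial_mul_choose (m+8) 7
      simp [Nat.descFactorial, Nat.factorial] at h
      rw [← h]; ring
    have h8 : 5040 * (m+7).choose 7 = (m+1)*(m+2)*(m+3)*(m+4)*(m+5)*(m+6)*(m+7) := by
      have h := Nat.descFactorial_eq_factorial_mul_choose (m+7) 7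
      simp [Nat.descFactorial, Nat.factorial] at h
      rw [← h]; ring
    -- Pascal: the sum bound is choose (m+7) 3 - 1
    have hpas : (m+8).choose 4 = (m+7).choose 3 + (m+7).choose 4 :=
      Nat.choose_succ_succ (m+7) 3
    obtain ⟨t, ht⟩ : ∃ t, (m+7).choose 3 = t + 1 :=
      ⟨(m+7).choose 3 - 1, by have := Nat.choose_pos (show 3 ≤ m+7 by omega); omega⟩
    have hb : (m+8).choose 4 - (m+7).choose 4 - 1 = t := by omega
    rw [hb]
    rw [Finset.sum_add_distrib, Finset.sum_const, Nat.card_Icc, smul_eq_mul]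
    have hg := gauss_icc t
    have key : 2 * ((t + 1 - 1) * (m+7).choose 4) + t * (t + 1) =
        2 * (9 * (m+8).choose 5 + 36 * (m+8).choose 6 + 34 * (m+8).choose 7 +
          (m+7).choose 7) := by
      rw [ht] at h3
      have e : t + 1 - 1 = t := by omega
      rw [e]
      apply @Nat.cast_injective ℚ
      push_cast
      have e3 : (t : ℚ) = ((m:ℚ)+5)*((m:ℚ)+6)*((m:ℚ)+7)/6 - 1 := by
        have : (6:ℚ) * ((t:ℚ) + 1) = ((m:ℚ)+5)*((m:ℚ)+6)*((m:ℚ)+7) := by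
          exact_mod_cast congrArg (Nat.cast : ℕ → ℚ) h3
        linarith
      have e4 : ((m+7).choose 4 : ℚ) = ((m:ℚ)+4)*((m:ℚ)+5)*((m:ℚ)+6)*((m:ℚ)+7)/24 := by
        have : (24:ℚ) * ((m+7).choose 4 : ℚ) =
            ((m:ℚ)+4)*((m:ℚ)+5)*((m:ℚ)+6)*((m:ℚ)+7) := by
          exact_mod_cast congrArg (Nat.cast : ℕ → ℚ) h4
        linarith
      have e5 : ((m+8).choose 5 : ℚ) =
          ((m:ℚ)+4)*((m:ℚ)+5)*((m:ℚ)+6)*((m:ℚ)+7)*((m:ℚ)+8)/120 := by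
        have : (120:ℚ) * ((m+8).choose 5 : ℚ) =
            ((m:ℚ)+4)*((m:ℚ)+5)*((m:ℚ)+6)*((m:ℚ)+7)*((m:ℚ)+8) := by
          exact_mod_cast congrArg (Nat.cast : ℕ → ℚ) h5
        linarith
      have e6 : ((m+8).choose 6 : ℚ) =
          ((m:ℚ)+3)*((m:ℚ)+4)*((m:ℚ)+5)*((m:ℚ)+6)*((m:ℚ)+7)*((m:ℚ)+8)/720 := by
        have : (720:ℚ) * ((m+8).choose 6 : ℚ) =
            ((m:ℚ)+3)*((m:ℚ)+4)*((m:ℚ)+5)*((m:ℚ)+6)*((m:ℚ)+7)*((m:ℚ)+8) := by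
          exact_mod_cast congrArg (Nat.cast : ℕ → ℚ) h6
        linarith
      have e7 : ((m+8).choose 7 : ℚ) =
          ((m:ℚ)+2)*((m:ℚ)+3)*((m:ℚ)+4)*((m:ℚ)+5)*((m:ℚ)+6)*((m:ℚ)+7)*((m:ℚ)+8)/5040 := by
        have : (5040:ℚ) * ((m+8).choose 7 : ℚ) =
            ((m:ℚ)+2)*((m:ℚ)+3)*((m:ℚ)+4)*((m:ℚ)+5)*((m:ℚ)+6)*((m:ℚ)+7)*((m:ℚ)+8) := by
          exact_mod_cast congrArg (Nat.cast : ℕ → ℚ) h7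
        linarith
      have e8 : ((m+7).choose 7 : ℚ) =
          ((m:ℚ)+1)*((m:ℚ)+2)*((m:ℚ)+3)*((m:ℚ)+4)*((m:ℚ)+5)*((m:ℚ)+6)*((m:ℚ)+7)/5040 := by
        have : (5040:ℚ) * ((m+7).choose 7 : ℚ) =
            ((m:ℚ)+1)*((m:ℚ)+2)*((m:ℚ)+3)*((m:ℚ)+4)*((m:ℚ)+5)*((m:ℚ)+6)*((m:ℚ)+7) := by
          exact_mod_cast congrArg (Nat.cast : ℕ → ℚ) h8
        linarith
      rw [e3, e4, e5, e6, e7, e8]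
      ring
    linarith [key, hg]
end
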